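/- Let K ≥ 1, 0 < β ≤ 1/K, η > 0, let x, y ∈ Δ^{[K],β}, and let g ∈ ℝ_{≥0}^K. Let z be a minimizer over x' ∈ Δ^{[K],β} of ⟨−η·g, x'⟩ + D_Ψ(x', x), and let z̃ ∈ ℝ_{>0}^K be given by z̃ᵢ = xᵢ·exp(η·gᵢ). Then ⟨g, y − x⟩ ≤ η^{−1}·D_Ψ(y, x) − η^{−1}·D_Ψ(y, z) + η^{−1}·D_Ψ(x, z̃). -/

import Mathlib

/-- The Bregman divergence induced by the unnormalized negative entropy
`Ψ(x) = Σᵢ (xᵢ ln xᵢ − xᵢ)`, i.e. `D_Ψ(y, x) = Σᵢ (yᵢ ln(yᵢ/xᵢ) − yᵢ + xᵢ)`. -/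
noncomputable def DPsi {K : ℕ} (y x : Fin K → ℝ) : ℝ :=
  ∑ i, (y i * Real.log (y i / x i) - y i + x i)

/-- The `β`-truncated probability simplex `Δ^{[K],β}`. -/
def simplexB (K : ℕ) (β : ℝ) : Set (Fin K → ℝ) :=
  {x | (∀ i, β ≤ x i) ∧ ∑ i, x i = 1}

private lemma slope_aux {K : ℕ} (z d : Fin K → ℝ) (hz : ∀ i, 0 < z i) (c : ℝ)
    (h : ∀ t ∈ Set.Ioc (0:ℝ) 1,
      t * c ≤ (∑ i, (z i + t * d i) * Real.log (z i + t * d i))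
              - ∑ i, (z i + (0:ℝ) * d i) * Real.log (z i + (0:ℝ) * d i)) :
    c ≤ ∑ i, (Real.log (z i) + 1) * d i := by
  set φ : ℝ → ℝ := fun t => ∑ i, (z i + t * d i) * Real.log (z i + t * d i) with hφdef
  have hder : HasDerivAt φ (∑ i, (Real.log (z i) + 1) * d i) 0 := by
    apply HasDerivAt.fun_sum
    intro i _
    have h1 : HasDerivAt (fun t : ℝ => z i + t * d i) (d i) 0 := by
      simpa using ((hasDerivAt_id (0:ℝ)).mul_const (d i)).const_add (z i)
    have h2 : HasDerivAt (fun v : ℝ => v * Real.log v)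
        (Real.log (z i + 0 * d i) + 1) (z i + 0 * d i) := by
      rw [zero_mul, add_zero]; exact Real.hasDerivAt_mul_log (hz i).ne'
    have h3 := h2.comp 0 h1
    simpa [Function.comp_def] using h3
  rw [hasDerivAt_iff_tendsto_slope] at hder
  have hmono : Filter.Tendsto (slope φ 0) (nhdsWithin 0 (Set.Ioi 0))
      (nhds (∑ i, (Real.log (z i) + 1) * d i)) :=
    hder.mono_left (nhdsWithin_mono _ (fun t ht => ne_of_gt ht))
  refine ge_of_tendsto hmono ?_
  filter_upwards [Ioc_mem_nhdsGT_of_mem (Set.left_mem_Ico.mpr one_pos)] with t ht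
  have h4 := h t ht
  have hφ0 : φ 0 = ∑ i, (z i + (0:ℝ) * d i) * Real.log (z i + (0:ℝ) * d i) := rfl
  rw [slope_def_field, sub_zero, le_div_iff₀ ht.1]
  rw [← hφ0] at h4
  linarith

/-- the single-step online-mirror-descent inequality
`⟨g, y − x⟩ ≤ η⁻¹·D_Ψ(y, x) − η⁻¹·D_Ψ(y, z) + η⁻¹·D_Ψ(x, z̃)`. -/
theorem omd_single_step (K : ℕ) (hK : 1 ≤ K) (β η : ℝ)
    (hβ0 : 0 < β) (hβK : β ≤ 1 / (K : ℝ)) (hη : 0 < η)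
    (x y g z ztilde : Fin K → ℝ)
    (hx : x ∈ simplexB K β) (hy : y ∈ simplexB K β)
    (hg : ∀ i, 0 ≤ g i)
    (hzmem : z ∈ simplexB K β)
    (hzmin : ∀ x' ∈ simplexB K β,
      (∑ i, -(η * g i) * z i) + DPsi z x ≤ (∑ i, -(η * g i) * x' i) + DPsi x' x)
    (hztilde : ∀ i, ztilde i = x i * Real.exp (η * g i)) :
    ∑ i, g i * (y i - x i) ≤
      η⁻¹ * DPsi y x - η⁻¹ * DPsi y z + η⁻¹ * DPsi x ztilde := by
  obtain ⟨hxβ, hxs⟩ := hx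
  obtain ⟨hyβ, hys⟩ := hy
  obtain ⟨hzβ, hzs⟩ := hzmem
  have hxp : ∀ i, 0 < x i := fun i => lt_of_lt_of_le hβ0 (hxβ i)
  have hyp : ∀ i, 0 < y i := fun i => lt_of_lt_of_le hβ0 (hyβ i)
  have hzp : ∀ i, 0 < z i := fun i => lt_of_lt_of_le hβ0 (hzβ i)
  have hztp : ∀ i, 0 < ztilde i := by
    intro i; rw [hztilde i]; exact mul_pos (hxp i) (Real.exp_pos _)
  have hlogzt : ∀ i, Real.log (ztilde i) = Real.log (x i) + η * g i := by
    intro i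
    rw [hztilde i, Real.log_mul (hxp i).ne' (Real.exp_ne_zero _), Real.log_exp]
  have keyF : ∀ w : Fin K → ℝ, (∀ i, 0 < w i) →
      (∑ i, -(η * g i) * w i) + DPsi w x
        = ∑ i, (w i * Real.log (w i) - w i * (Real.log (ztilde i) + 1) + x i) := by
    intro w hw
    rw [DPsi, ← Finset.sum_add_distrib]
    refine Finset.sum_congr rfl fun i _ => ?_
    rw [Real.log_div (hw i).ne' (hxp i).ne', hlogzt i]
    ring
  have hsplit : ∀ v : Fin K → ℝ,
      ∑ i, (v i * Real.log (v i) - v i * (Real.log (ztilde i) + 1) + x i)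
        = (∑ i, v i * Real.log (v i)) - (∑ i, v i * (Real.log (ztilde i) + 1))
          + ∑ i, x i := by
    intro v
    rw [Finset.sum_add_distrib, Finset.sum_sub_distrib]
  -- Step A
  have hA : (∑ i, (Real.log (ztilde i) + 1) * (y i - z i))
      ≤ ∑ i, (Real.log (z i) + 1) * (y i - z i) := by
    apply slope_aux z (fun i => y i - z i) hzp
    intro t ht
    set w : Fin K → ℝ := fun i => z i + t * (y i - z i) with hwdef
    have hwmem : w ∈ simplexB K β := by
      constructor
      · intro i
        have h1 : 0 ≤ t * (y i - β) := mul_nonneg ht.1.le (sub_nonneg.mpr (hyβ i))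
        have h2 : 0 ≤ (1 - t) * (z i - β) :=
          mul_nonneg (sub_nonneg.mpr ht.2) (sub_nonneg.mpr (hzβ i))
        show β ≤ z i + t * (y i - z i)
        nlinarith
      · show ∑ i, (z i + t * (y i - z i)) = 1
        have e : ∑ i, (z i + t * (y i - z i))
            = (∑ i, z i) + t * ((∑ i, y i) - ∑ i, z i) := by
          rw [Finset.sum_add_distrib, ← Finset.mul_sum, Finset.sum_sub_distrib]
        rw [e, hzs, hys]; ring
    have hwp : ∀ i, 0 < w i := fun i => lt_of_lt_of_le hβ0 (hwmem.1 i)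
    have hm := hzmin w hwmem
    rw [keyF z hzp, keyF w hwp, hsplit z, hsplit w] at hm
    have hw1 : ∑ i, w i * (Real.log (ztilde i) + 1)
        = (∑ i, z i * (Real.log (ztilde i) + 1))
          + t * ∑ i, (Real.log (ztilde i) + 1) * (y i - z i) := by
      rw [Finset.mul_sum, ← Finset.sum_add_distrib]
      exact Finset.sum_congr rfl fun i _ => by simp only [hwdef]; ring
    have hφ0 : ∑ i, (z i + (0:ℝ) * (y i - z i)) * Real.log (z i + (0:ℝ) * (y i - z i))
        = ∑ i, z i * Real.log (z i) := by
      refine Finset.sum_congr rfl fun i _ => by ring_nf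
    rw [hφ0]
    have hwφ : ∑ i, (z i + t * (y i - z i)) * Real.log (z i + t * (y i - z i))
        = ∑ i, w i * Real.log (w i) := rfl
    rw [hwφ]
    linarith
  have hA' : 0 ≤ ∑ i, (Real.log (z i) - Real.log (ztilde i)) * (y i - z i) := by
    have e : ∑ i, (Real.log (z i) - Real.log (ztilde i)) * (y i - z i)
        = (∑ i, (Real.log (z i) + 1) * (y i - z i))
          - ∑ i, (Real.log (ztilde i) + 1) * (y i - z i) := by
      rw [← Finset.sum_sub_distrib]
      exact Finset.sum_congr rfl fun i _ => by ring
    linarith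
  have hB : ∀ i, 0 ≤ z i * (Real.log (z i) - Real.log (ztilde i)) + ztilde i - z i := by
    intro i
    have h5 : Real.log (ztilde i / z i) ≤ ztilde i / z i - 1 :=
      Real.log_le_sub_one_of_pos (div_pos (hztp i) (hzp i))
    rw [Real.log_div (hztp i).ne' (hzp i).ne'] at h5
    have h6 : z i * (Real.log (ztilde i) - Real.log (z i)) ≤ z i * (ztilde i / z i - 1) :=
      mul_le_mul_of_nonneg_left h5 (hzp i).le
    have h7 : z i * (ztilde i / z i - 1) = ztilde i - z i := by
      field_simp [(hzp i).ne']
    linarith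
  have hmono2 : DPsi y z ≤ DPsi y ztilde := by
    have e : DPsi y ztilde - DPsi y z
        = (∑ i, (Real.log (z i) - Real.log (ztilde i)) * (y i - z i))
          + ∑ i, (z i * (Real.log (z i) - Real.log (ztilde i)) + ztilde i - z i) := by
      rw [DPsi, DPsi, ← Finset.sum_sub_distrib, ← Finset.sum_add_distrib]
      refine Finset.sum_congr rfl fun i _ => ?_
      rw [Real.log_div (hyp i).ne' (hztp i).ne', Real.log_div (hyp i).ne' (hzp i).ne']
      ring
    have hs := Finset.sum_nonneg (fun i (_ : i ∈ Finset.univ) => hB i)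
    linarith
  have hid : DPsi y x + DPsi x ztilde - η * ∑ i, g i * (y i - x i) = DPsi y ztilde := by
    rw [DPsi, DPsi, DPsi, Finset.mul_sum, ← Finset.sum_add_distrib, ← Finset.sum_sub_distrib]
    refine Finset.sum_congr rfl fun i _ => ?_
    rw [Real.log_div (hyp i).ne' (hxp i).ne', Real.log_div (hxp i).ne' (hztp i).ne',
      Real.log_div (hyp i).ne' (hztp i).ne', hlogzt i]
    ring
  have hfin : η * ∑ i, g i * (y i - x i) ≤ DPsi y x - DPsi y z + DPsi x ztilde := by
    linarith
  calc ∑ i, g i * (y i - x i) = η⁻¹ * (η * ∑ i, g i * (y i - x i)) := by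
        field_simp
    _ ≤ η⁻¹ * (DPsi y x - DPsi y z + DPsi x ztilde) :=
        mul_le_mul_of_nonneg_left hfin (by positivity)
    _ = η⁻¹ * DPsi y x - η⁻¹ * DPsi y z + η⁻¹ * DPsi x ztilde := by ring
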